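/- arXiv:1205.1289 — 9 statements merged into one kernel-verified Lean document; each statement's English description precedes it below -/
import Mathlib

section
/- Let d ≥ 1 and let E ⊆ ℝ^d satisfy the Birkhoff property. Then there exists p ∈ ℝ^d with |p| = 1 such that for every q ∈ ℤ^d with q·p > 0 one has E + q ⊆ E, and for every q ∈ ℤ^d with q·p < 0 one has E ⊆ E + q. -/
open scoped RealInnerProductSpace

noncomputable def vec {d : ℕ} (q : Fin d → ℤ) : EuclideanSpace ℝ (Fin d) :=
  WithLp.toLp 2 (fun i => (q i : ℝ))

/-- The translate `E + q` of a set `E ⊆ ℝ^d` by an integer vector `q ∈ ℤ^d`. -/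
def transl {d : ℕ} (E : Set (EuclideanSpace ℝ (Fin d))) (q : Fin d → ℤ) :
    Set (EuclideanSpace ℝ (Fin d)) :=
  (fun x => x + vec q) '' E


lemma vec_add {d : ℕ} (a b : Fin d → ℤ) : vec (a + b) = vec a + vec b := by
  ext i
  simp [vec, PiLp.add_apply]

lemma vec_neg {d : ℕ} (a : Fin d → ℤ) : vec (-a) = - vec a := by
  ext i
  simp [vec, PiLp.neg_apply]

lemma vec_zero {d : ℕ} : vec (0 : Fin d → ℤ) = 0 := by
  ext i
  simp [vec]

lemma vec_zsmul {d : ℕ} (c : ℤ) (a : Fin d → ℤ) : vec (c • a) = (c : ℝ) • vec a := by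
  ext i
  simp [vec, PiLp.smul_apply]

lemma transl_zero {d : ℕ} (E : Set (EuclideanSpace ℝ (Fin d))) : transl E 0 = E := by
  simp [transl, vec_zero]

lemma transl_transl {d : ℕ} (E : Set (EuclideanSpace ℝ (Fin d))) (a b : Fin d → ℤ) :
    transl (transl E a) b = transl E (a + b) := by
  simp only [transl, Set.image_image, vec_add]
  congr 1
  funext x
  abel

lemma transl_mono {d : ℕ} {A B : Set (EuclideanSpace ℝ (Fin d))} (h : A ⊆ B) (q : Fin d → ℤ) :
    transl A q ⊆ transl B q := Set.image_mono h

variable {d : ℕ} {E : Set (EuclideanSpace ℝ (Fin d))}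

lemma sub_of_le {a : Fin d → ℤ} (h : E ⊆ transl E a) (b : Fin d → ℤ) :
    transl E b ⊆ transl E (a + b) := by
  intro x hx
  rw [← transl_transl]
  exact transl_mono h b hx

lemma le_add {a b : Fin d → ℤ} (ha : E ⊆ transl E a) (hb : E ⊆ transl E b) :
    E ⊆ transl E (a + b) :=
  fun x hx => sub_of_le ha b (hb hx)

lemma le_nsmul {a : Fin d → ℤ} (h : E ⊆ transl E a) (k : ℕ) :
    E ⊆ transl E (k • a) := by
  induction k with
  | zero => simp [transl_zero]
  | succ k ih =>
      have h2 := le_add h ih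
      rwa [succ_nsmul, add_comm]

lemma le_zsmul {a : Fin d → ℤ} (h : E ⊆ transl E a) {c : ℤ} (hc : 0 ≤ c) :
    E ⊆ transl E (c • a) := by
  obtain ⟨k, rfl⟩ := Int.eq_ofNat_of_zero_le hc
  rw [natCast_zsmul]
  exact le_nsmul h k

lemma le_sum {ι : Type} (t : Finset ι) (b : ι → ℤ) (m : ι → Fin d → ℤ)
    (hb : ∀ i ∈ t, 0 ≤ b i) (hm : ∀ i ∈ t, E ⊆ transl E (m i)) :
    E ⊆ transl E (∑ i ∈ t, b i • m i) := by
  classical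
  induction t using Finset.induction_on with
  | empty => simp [transl_zero]
  | insert i t hni ih =>
      rw [Finset.sum_insert hni]
      exact le_add (le_zsmul (hm i (Finset.mem_insert_self i t)) (hb i (Finset.mem_insert_self i t)))
        (ih (fun j hj => hb j (Finset.mem_insert_of_mem hj))
            (fun j hj => hm j (Finset.mem_insert_of_mem hj)))

noncomputable def vecHom (d : ℕ) : (Fin d → ℤ) →+ EuclideanSpace ℝ (Fin d) where
  toFun := vec
  map_zero' := vec_zero
  map_add' := vec_add

lemma key (hd : 1 ≤ d) (hBirkhoff : ∀ q : Fin d → ℤ, transl E q ⊆ E ∨ E ⊆ transl E q) :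
    ∃ p : EuclideanSpace ℝ (Fin d), ‖p‖ = 1 ∧
      ∀ q : Fin d → ℤ, ¬ (transl E q ⊆ E) → ⟪vec q, p⟫ ≤ 0 := by
  classical
  by_contra hcon
  push_neg at hcon
  -- compactness: finitely many bad directions cover the sphere
  have hSphC : IsCompact (Metric.sphere (0 : EuclideanSpace ℝ (Fin d)) 1) := isCompact_sphere 0 1
  have hcov : Metric.sphere (0 : EuclideanSpace ℝ (Fin d)) 1 ⊆
      ⋃ (q : {q : Fin d → ℤ // ¬ transl E q ⊆ E}), {p | 0 < ⟪vec q.1, p⟫} := by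
    intro p hp
    have hp1 : ‖p‖ = 1 := by simpa using hp
    obtain ⟨q, hq, hq2⟩ := hcon p hp1
    exact Set.mem_iUnion.2 ⟨⟨q, hq⟩, hq2⟩
  obtain ⟨ts, hts⟩ := hSphC.elim_finite_subcover _
    (fun q => isOpen_lt continuous_const (Continuous.inner continuous_const continuous_id))
    hcov
  set F : Finset (Fin d → ℤ) := ts.image Subtype.val with hFdef
  have hF1 : ∀ n ∈ F, ¬ transl E n ⊆ E := by
    intro n hn
    rcases Finset.mem_image.1 hn with ⟨⟨q, hq⟩, _, rfl⟩
    exact hq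
  have hFcov : ∀ p : EuclideanSpace ℝ (Fin d), ‖p‖ = 1 → ∃ n ∈ F, 0 < ⟪vec n, p⟫ := by
    intro p hp1
    have hp : p ∈ Metric.sphere (0 : EuclideanSpace ℝ (Fin d)) 1 := by simpa using hp1
    have := hts hp
    rcases Set.mem_iUnion₂.1 this with ⟨q, hq, hq2⟩
    exact ⟨q.1, Finset.mem_image_of_mem _ hq, hq2⟩
  -- a point on the sphere
  have hsph : ∃ e : EuclideanSpace ℝ (Fin d), ‖e‖ = 1 := by
    refine ⟨EuclideanSpace.single (⟨0, hd⟩ : Fin d) (1:ℝ), ?_⟩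
    rw [EuclideanSpace.norm_single]; exact norm_one
  obtain ⟨e, he⟩ := hsph
  -- 0 is in the convex hull of vec '' F
  have hhull : (0 : EuclideanSpace ℝ (Fin d)) ∈ convexHull ℝ (vec '' (F : Set (Fin d → ℤ))) := by
    by_contra h0
    obtain ⟨f, u, hfu, hub⟩ := geometric_hahn_banach_point_closed (convex_convexHull ℝ _)
      (((F.finite_toSet.image vec).isCompact_convexHull ℝ).isClosed) h0
    have hu0 : (0:ℝ) < u := by simpa using hfu
    set p0 := (InnerProductSpace.toDual ℝ (EuclideanSpace ℝ (Fin d))).symm f with hp0def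
    have hinner : ∀ x, ⟪p0, x⟫ = f x := fun x => InnerProductSpace.toDual_symm_apply
    have hfn : ∀ n ∈ F, 0 < f (vec n) := by
      intro n hn
      have : vec n ∈ convexHull ℝ (vec '' (F : Set (Fin d → ℤ))) :=
        subset_convexHull ℝ _ ⟨n, hn, rfl⟩
      exact hu0.trans (hub _ this)
    have hp0ne : p0 ≠ 0 := by
      obtain ⟨n, hnF, _⟩ := hFcov e he
      intro h
      have := hfn n hnF
      rw [← hinner, h, inner_zero_left] at this
      exact lt_irrefl _ this
    set p : EuclideanSpace ℝ (Fin d) := -((‖p0‖⁻¹ : ℝ) • p0) with hpdef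
    have hp1 : ‖p‖ = 1 := by
      rw [hpdef, norm_neg]
      exact norm_smul_inv_norm hp0ne
    obtain ⟨n, hnF, hn⟩ := hFcov p hp1
    have h1 : ⟪vec n, p⟫ = -(‖p0‖⁻¹ * f (vec n)) := by
      rw [hpdef, inner_neg_right, real_inner_smul_right, real_inner_comm, hinner]
    rw [h1] at hn
    have h2 : 0 < ‖p0‖⁻¹ * f (vec n) :=
      mul_pos (inv_pos.2 (norm_pos_iff.2 hp0ne)) (hfn n hnF)
    linarith
  -- extract convex combination
  rw [convexHull_eq] at hhull
  obtain ⟨ι, t, w, z, hw0, hw1, hz, hcm⟩ := hhull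
  have hsum : ∑ i ∈ t, w i • z i = 0 := by
    rw [← Finset.centerMass_eq_of_sum_1 _ _ hw1]; exact hcm
  choose m hmF hmz using fun (i : {i // i ∈ t}) => hz i.1 i.2
  have hsum' : ∑ i ∈ t.attach, w i.1 • vec (m i) = 0 := by
    calc ∑ i ∈ t.attach, w i.1 • vec (m i) = ∑ i ∈ t.attach, w i.1 • z i.1 := by
          apply Finset.sum_congr rfl; intro i _; rw [hmz]
      _ = ∑ i ∈ t, w i • z i := Finset.sum_attach t (fun i => w i • z i)
      _ = 0 := hsum
  have hw1' : ∑ i ∈ t.attach, w i.1 = 1 := by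
    rw [Finset.sum_attach t w]; exact hw1
  have hmE : ∀ i : {i // i ∈ t}, E ⊆ transl E (m i) := by
    intro i
    rcases hBirkhoff (m i) with h | h
    · exact absurd h (hF1 _ (hmF i))
    · exact h
  have vec_sum : ∀ (s : Finset {i // i ∈ t}) (g : {i // i ∈ t} → Fin d → ℤ),
      vec (∑ i ∈ s, g i) = ∑ i ∈ s, vec (g i) := fun s g => map_sum (vecHom d) g s
  -- the floor points
  set c : ℕ → {i // i ∈ t} → ℤ := fun K i => ⌊(K : ℝ) * w i.1⌋ with hcdef
  set uu : ℕ → (Fin d → ℤ) := fun K => ∑ i ∈ t.attach, c K i • m i with huudef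
  set C : ℝ := ∑ i ∈ t.attach, ‖vec (m i)‖ with hCdef
  have hvecu : ∀ K, vec (uu K)
      = ∑ i ∈ t.attach, (((c K i : ℝ)) - (K:ℝ) * w i.1) • vec (m i) := by
    intro K
    have h1 : vec (uu K) = ∑ i ∈ t.attach, (c K i : ℝ) • vec (m i) := by
      rw [huudef, vec_sum]
      exact Finset.sum_congr rfl (fun i _ => vec_zsmul _ _)
    have h2 : ∑ i ∈ t.attach, ((K:ℝ) * w i.1) • vec (m i) = 0 := by
      have h3 := congrArg (fun v : EuclideanSpace ℝ (Fin d) => (K:ℝ) • v) hsum'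
      simpa [Finset.smul_sum, smul_smul] using h3
    rw [h1, ← sub_zero (∑ i ∈ t.attach, (c K i : ℝ) • vec (m i)), ← h2,
      ← Finset.sum_sub_distrib]
    exact Finset.sum_congr rfl (fun i _ => (sub_smul _ _ _).symm)
  have hnorm : ∀ K, ‖vec (uu K)‖ ≤ C := by
    intro K
    rw [hvecu K]
    refine (norm_sum_le _ _).trans (Finset.sum_le_sum ?_)
    intro i _
    rw [norm_smul]
    have h1 : ((c K i : ℝ)) ≤ (K:ℝ) * w i.1 := Int.floor_le _
    have h2 : (K:ℝ) * w i.1 - 1 < (c K i:ℝ) := Int.sub_one_lt_floor _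
    have h3 : ‖((c K i : ℝ)) - (K:ℝ) * w i.1‖ ≤ 1 := by
      rw [Real.norm_eq_abs, abs_le]; constructor <;> linarith
    have h4 := mul_le_mul_of_nonneg_right h3 (norm_nonneg (vec (m i)))
    simpa using h4
  set B : ℤ := ⌈C⌉ with hBdef
  have hcoord : ∀ K, uu K ∈ Set.pi Set.univ (fun _ : Fin d => Set.Icc (-B) B) := by
    intro K
    intro j _
    have hval : ((uu K j : ℤ) : ℝ) = ⟪EuclideanSpace.single j (1:ℝ), vec (uu K)⟫ := by
      rw [EuclideanSpace.inner_single_left]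
      simp [vec]
    have habs : |((uu K j : ℤ) : ℝ)| ≤ C := by
      rw [hval]
      refine (abs_real_inner_le_norm _ _).trans ?_
      have := hnorm K
      simpa [EuclideanSpace.norm_single] using this
    have hBle : C ≤ (B:ℝ) := Int.le_ceil C
    have : |uu K j| ≤ B := by
      have h5 : ((|uu K j| : ℤ) : ℝ) ≤ (B:ℝ) := by
        rw [Int.cast_abs]
        exact habs.trans hBle
      exact_mod_cast h5
    exact Set.mem_Icc.2 (abs_le.1 this)
  have hfinbox : (Set.pi Set.univ fun _ : Fin d => Set.Icc (-B) B).Finite :=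
    Set.Finite.pi (fun _ => Set.finite_Icc _ _)
  have hfib : ∃ y, (uu ⁻¹' {y}).Infinite := by
    by_contra hfin
    push_neg at hfin
    have hU : (Set.univ : Set ℕ).Finite := by
      have hsub : (Set.univ : Set ℕ) ⊆
          ⋃ y ∈ (Set.pi Set.univ fun _ : Fin d => Set.Icc (-B) B), uu ⁻¹' {y} :=
        fun K _ => Set.mem_biUnion (hcoord K) rfl
      exact (Set.Finite.biUnion hfinbox (fun y _ => hfin y)).subset hsub
    exact Set.infinite_univ hU
  obtain ⟨y, hy⟩ := hfib
  obtain ⟨K, hK⟩ := hy.nonempty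
  obtain ⟨K', hK', hgt⟩ := hy.exists_gt (K + t.card)
  have hKK' : (K:ℝ) ≤ (K':ℝ) := by exact_mod_cast Nat.le_of_lt (lt_of_le_of_lt (Nat.le_add_right K t.card) hgt)
  set b : {i // i ∈ t} → ℤ := fun i => c K' i - c K i with hbdef
  have hb0 : ∀ i, 0 ≤ b i := by
    intro i
    refine sub_nonneg.2 (Int.floor_le_floor ?_)
    have hw := hw0 i.1 i.2
    nlinarith
  have hbsum0 : ∑ i ∈ t.attach, b i • m i = 0 := by
    have heq : ∑ i ∈ t.attach, b i • m i = uu K' - uu K := by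
      rw [huudef, ← Finset.sum_sub_distrib]
      exact Finset.sum_congr rfl (fun i _ => sub_smul _ _ _)
    rw [heq, (Set.mem_singleton_iff.1 hK), (Set.mem_singleton_iff.1 hK'), sub_self]
  have hbpos : 0 < ∑ i ∈ t.attach, b i := by
    have hr : (1:ℝ) ≤ ∑ i ∈ t.attach, (b i : ℝ) := by
      have hstep : ∀ i ∈ t.attach,
          ((K':ℝ) - (K:ℝ)) * w i.1 - 1 ≤ (b i : ℝ) := by
        intro i _
        have h1 : ((c K i : ℝ)) ≤ (K:ℝ) * w i.1 := Int.floor_le _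
        have h2 : (K':ℝ) * w i.1 - 1 < (c K' i:ℝ) := Int.sub_one_lt_floor _
        have : (b i : ℝ) = (c K' i : ℝ) - (c K i : ℝ) := by rw [hbdef]; push_cast; ring
        rw [this]; nlinarith
      have hsumge := Finset.sum_le_sum hstep
      have hcardeq : (t.attach.card : ℝ) = (t.card : ℝ) := by rw [Finset.card_attach]
      have hsum2 : ∑ i ∈ t.attach, (((K':ℝ) - (K:ℝ)) * w i.1 - 1)
          = ((K':ℝ) - (K:ℝ)) - (t.card : ℝ) := by
        rw [Finset.sum_sub_distrib, ← Finset.mul_sum, hw1']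
        simp [Finset.card_attach]
      have hKgt : (K:ℝ) + (t.card:ℝ) + 1 ≤ (K':ℝ) := by
        have : K + t.card + 1 ≤ K' := hgt
        exact_mod_cast this
      rw [hsum2] at hsumge
      linarith
    have : (0:ℝ) < ∑ i ∈ t.attach, (b i : ℝ) := lt_of_lt_of_le zero_lt_one hr
    exact_mod_cast this
  have hex : ∃ i₀, 0 < b i₀ := by
    by_contra hno
    push_neg at hno
    have : ∑ i ∈ t.attach, b i ≤ 0 := Finset.sum_nonpos (fun i _ => hno i)
    omega
  obtain ⟨i₀, hi₀⟩ := hex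
  set b'' : {i // i ∈ t} → ℤ := fun i => if i = i₀ then b i - 1 else b i with hb''def
  have hsplit : ∑ i ∈ t.attach, b i • m i
      = (∑ i ∈ t.attach, b'' i • m i) + m i₀ := by
    have hterm : ∀ i ∈ t.attach, b i • m i
        = b'' i • m i + (if i = i₀ then m i₀ else 0) := by
      intro i _
      by_cases h : i = i₀
      · subst h
        simp only [hb''def, if_pos rfl, if_true]
        module
      · simp [hb''def, h]
    rw [Finset.sum_congr rfl hterm, Finset.sum_add_distrib, Finset.sum_ite_eq' t.attach i₀]
    simp
  have hr : (∑ i ∈ t.attach, b'' i • m i) + m i₀ = 0 := by rw [← hsplit]; exact hbsum0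
  have hEr : E ⊆ transl E (∑ i ∈ t.attach, b'' i • m i) := by
    refine le_sum _ _ _ ?_ (fun i _ => hmE i)
    intro i _
    by_cases h : i = i₀
    · subst h; simp only [hb''def, if_pos rfl]; omega
    · simp only [hb''def, if_neg h]; exact hb0 i
  have hfinal : transl E (m i₀) ⊆ E := by
    have h1 := transl_mono hEr (m i₀)
    rw [transl_transl, hr, transl_zero] at h1
    exact h1
  exact hF1 (m i₀) (hmF i₀) hfinal

/-- If `d ≥ 1` and `E ⊆ ℝ^d` satisfies the Birkhoff property, then there is a unit
vector `p` such that `E + q ⊆ E` whenever `q·p > 0` and `E ⊆ E + q` whenever `q·p < 0`. -/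
theorem stmt0 (d : ℕ) (hd : 1 ≤ d) (E : Set (EuclideanSpace ℝ (Fin d)))
    (hBirkhoff : ∀ q : Fin d → ℤ, transl E q ⊆ E ∨ E ⊆ transl E q) :
    ∃ p : EuclideanSpace ℝ (Fin d), ‖p‖ = 1 ∧
      (∀ q : Fin d → ℤ, 0 < ⟪vec q, p⟫ → transl E q ⊆ E) ∧
      (∀ q : Fin d → ℤ, ⟪vec q, p⟫ < 0 → E ⊆ transl E q) := by
  obtain ⟨p, hp1, hp⟩ := key hd hBirkhoff
  refine ⟨p, hp1, ?_, ?_⟩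
  · intro q hq
    by_contra hnot
    exact absurd hq (not_lt.2 (hp q hnot))
  · intro q hq
    have hneg : transl E (-q) ⊆ E := by
      by_contra hnot
      have := hp (-q) hnot
      rw [vec_neg, inner_neg_left] at this
      linarith
    have h1 := transl_mono hneg q
    rw [transl_transl, neg_add_cancel, transl_zero] at h1
    exact h1
end

section
/- Let Z ⊆ ℤ^d satisfy: 0 ∈ Z, Z + Z ⊆ Z (Z is closed under addition), and for every z ∈ ℤ^d either z ∈ Z or −z ∈ Z. Then either Z = ℤ^d, or there exists p ∈ ℝ^d with p ≠ 0 such that q·p ≥ 0 for every q ∈ Z. -/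
open scoped RealInnerProductSpace

open Finset Matrix

lemma ratLP : ∀ (k : ℕ) {d : ℕ} (q : Fin k → Fin d → ℚ) (z : Fin d → ℚ)
    (l : Fin k → ℝ), (∀ i, 0 ≤ l i) →
    (∀ j, ∑ i, l i * (q i j : ℝ) = (z j : ℝ)) →
    ∃ μ : Fin k → ℚ, (∀ i, 0 ≤ μ i) ∧ ∀ j, ∑ i, μ i * q i j = z j := by
  intro k
  induction k with
  | zero =>
    intro d q z l _ hs
    refine ⟨0, fun i => le_refl _, fun j => ?_⟩
    have := hs j
    simp only [Finset.univ_eq_empty, Finset.sum_empty] at this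
    simp only [Pi.zero_apply, zero_mul, Finset.sum_const_zero]
    exact_mod_cast this
  | succ m ih =>
    intro d q z l hl hs
    by_cases hind : LinearIndependent ℚ q
    · -- Gram matrix argument
      set G : Matrix (Fin (m+1)) (Fin (m+1)) ℚ := Matrix.of fun i j => ∑ t, q i t * q j t with hGdef
      have hGdet : G.det ≠ 0 := by
        intro h
        obtain ⟨v, hv0, hv⟩ := (Matrix.exists_mulVec_eq_zero_iff).2 h
        have key : ∑ t, (∑ i, v i * q i t)^2 = v ⬝ᵥ (G *ᵥ v) := by
          calc ∑ t, (∑ i, v i * q i t)^2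
              = ∑ t, ∑ i, ∑ i', (v i * q i t) * (v i' * q i' t) := by
                refine Finset.sum_congr rfl fun t _ => ?_
                rw [sq, Finset.sum_mul_sum]
            _ = ∑ i, ∑ t, ∑ i', (v i * q i t) * (v i' * q i' t) := Finset.sum_comm
            _ = ∑ i, v i * ∑ i', (∑ t, q i t * q i' t) * v i' := by
                refine Finset.sum_congr rfl fun i _ => ?_
                rw [Finset.mul_sum, Finset.sum_comm]
                refine Finset.sum_congr rfl fun i' _ => ?_
                rw [Finset.sum_mul, Finset.mul_sum]
                exact Finset.sum_congr rfl fun t _ => by ring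
            _ = v ⬝ᵥ (G *ᵥ v) := by
                simp [dotProduct, Matrix.mulVec, hGdef]
        have hsum : ∑ t, (∑ i, v i * q i t)^2 = 0 := by
          rw [key, hv, dotProduct_zero]
        have hsq : ∀ j, ∑ i, v i * q i j = 0 := by
          intro j
          have h1 : ∀ j ∈ Finset.univ, (0:ℚ) ≤ (∑ i, v i * q i j)^2 := fun j _ => sq_nonneg _
          have := (Finset.sum_eq_zero_iff_of_nonneg h1).1 hsum j (Finset.mem_univ j)
          exact pow_eq_zero_iff (two_ne_zero) |>.1 this
        refine hv0 (funext (Fintype.linearIndependent_iff.1 hind v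
          (funext fun j => by simpa [Finset.sum_apply] using hsq j)))
      -- the real Gram matrix
      have hGunit : IsUnit G.det := hGdet.isUnit
      set w : Fin (m+1) → ℚ := fun i => ∑ t, q i t * z t with hwdef
      set μ : Fin (m+1) → ℚ := G⁻¹ *ᵥ w with hμdef
      have hGμ : G *ᵥ μ = w := by
        rw [hμdef, Matrix.mulVec_mulVec, Matrix.mul_nonsing_inv G hGunit, Matrix.one_mulVec]
      set Gr : Matrix (Fin (m+1)) (Fin (m+1)) ℝ := G.map (Rat.cast) with hGrdef
      have hGrdet : Gr.det ≠ 0 := by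
        have : Gr.det = ((G.det : ℚ) : ℝ) := by
          rw [hGrdef, show (Rat.cast : ℚ → ℝ) = ⇑(Rat.castHom ℝ) from rfl,
            ← RingHom.mapMatrix_apply, ← RingHom.map_det]
        rw [this]
        exact_mod_cast hGdet
      have hGrl : Gr *ᵥ l = fun i => ((w i : ℚ) : ℝ) := by
        funext i
        show ∑ j, Gr i j * l j = ((w i : ℚ) : ℝ)
        have h1 : ∀ j, Gr i j * l j = ∑ t, (q i t : ℝ) * (l j * (q j t : ℝ)) := by
          intro j
          simp only [hGrdef, Matrix.map_apply, hGdef, Matrix.of_apply]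
          push_cast
          rw [Finset.sum_mul]
          exact Finset.sum_congr rfl fun t _ => by ring
        calc ∑ j, Gr i j * l j
            = ∑ j, ∑ t, (q i t : ℝ) * (l j * (q j t : ℝ)) :=
              Finset.sum_congr rfl fun j _ => h1 j
          _ = ∑ t, ∑ j, (q i t : ℝ) * (l j * (q j t : ℝ)) := Finset.sum_comm
          _ = ∑ t, (q i t : ℝ) * ∑ j, l j * (q j t : ℝ) := by
              exact Finset.sum_congr rfl fun t _ => (Finset.mul_sum _ _ _).symm
          _ = ∑ t, (q i t : ℝ) * (z t : ℝ) :=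
              Finset.sum_congr rfl fun t _ => by rw [hs t]
          _ = ((w i : ℚ) : ℝ) := by rw [hwdef]; push_cast; rfl
      have hGrμ : Gr *ᵥ (fun i => ((μ i : ℚ) : ℝ)) = fun i => ((w i : ℚ) : ℝ) := by
        funext i
        show ∑ j, Gr i j * (μ j : ℝ) = ((w i : ℚ) : ℝ)
        have h2 : ∑ j, G i j * μ j = w i := by
          have := congrFun hGμ i
          simpa [Matrix.mulVec, dotProduct] using this
        have h3 : ((∑ j, G i j * μ j : ℚ) : ℝ) = ((w i : ℚ) : ℝ) := by exact_mod_cast h2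
        rw [← h3]
        push_cast
        exact Finset.sum_congr rfl fun j _ => by
          simp only [hGrdef, Matrix.map_apply]
      have hinj : l = fun i => ((μ i : ℚ) : ℝ) := by
        have hGrunit : IsUnit Gr.det := hGrdet.isUnit
        have h1 : Gr⁻¹ *ᵥ (Gr *ᵥ l) = Gr⁻¹ *ᵥ (Gr *ᵥ (fun i => ((μ i : ℚ) : ℝ))) := by
          rw [hGrl, hGrμ]
        rwa [Matrix.mulVec_mulVec, Matrix.mulVec_mulVec, Matrix.nonsing_inv_mul Gr hGrunit,
          Matrix.one_mulVec, Matrix.one_mulVec] at h1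
      refine ⟨μ, fun i => ?_, fun j => ?_⟩
      · have := congrFun hinj i
        have h4 : (0:ℝ) ≤ (μ i : ℝ) := this ▸ hl i
        exact_mod_cast h4
      · have h5 : ((∑ i, μ i * q i j : ℚ) : ℝ) = ((z j : ℚ) : ℝ) := by
          push_cast
          rw [← hs j]
          exact Finset.sum_congr rfl fun i _ => by rw [congrFun hinj i]
        exact_mod_cast h5
    · -- dependent case
      rw [Fintype.not_linearIndependent_iff] at hind
      obtain ⟨g, hg, i₁, hgi₁⟩ := hind
      have hg' : ∀ j, ∑ i, g i * q i j = 0 := fun j => by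
        have := congrFun hg j
        simpa [Finset.sum_apply] using this
      set c : Fin (m+1) → ℚ := if 0 < g i₁ then g else -g with hcdef
      have hci₁ : 0 < c i₁ := by
        rw [hcdef]
        rcases lt_trichotomy (g i₁) 0 with h | h | h
        · rw [if_neg (by linarith)]; simpa using h
        · exact absurd h hgi₁
        · rw [if_pos h]; exact h
      have hc0 : ∀ j, ∑ i, c i * q i j = 0 := by
        intro j
        rw [hcdef]
        split
        · exact hg' j
        · simp only [Pi.neg_apply, neg_mul]
          rw [Finset.sum_neg_distrib]
          rw [hg' j, neg_zero]
      set S : Finset (Fin (m+1)) := Finset.univ.filter (fun i => 0 < c i) with hSdef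
      have hSne : S.Nonempty := ⟨i₁, by simp [hSdef, hci₁]⟩
      obtain ⟨i₀, hi₀S, hmin⟩ := S.exists_min_image (fun i => l i / (c i : ℝ)) hSne
      have hc₀ : 0 < c i₀ := by simpa [hSdef] using hi₀S
      have hc₀R : (0:ℝ) < (c i₀ : ℝ) := by exact_mod_cast hc₀
      set t : ℝ := l i₀ / (c i₀ : ℝ) with htdef
      have ht : 0 ≤ t := div_nonneg (hl i₀) hc₀R.le
      set l' : Fin (m+1) → ℝ := fun i => l i - t * (c i : ℝ) with hl'def
      have hl' : ∀ i, 0 ≤ l' i := by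
        intro i
        show 0 ≤ l i - t * (c i : ℝ)
        by_cases hci : 0 < c i
        · have hiS : i ∈ S := by simp [hSdef, hci]
          have hm := hmin i hiS
          have hciR : (0:ℝ) < (c i : ℝ) := by exact_mod_cast hci
          have : t * (c i : ℝ) ≤ l i := by
            rw [← le_div_iff₀ hciR]
            exact hm
          linarith
        · push_neg at hci
          have h6 : (c i : ℝ) ≤ 0 := by exact_mod_cast hci
          have h7 : t * (c i : ℝ) ≤ 0 := mul_nonpos_of_nonneg_of_nonpos ht h6
          have := hl i
          linarith
      have hl'i₀ : l' i₀ = 0 := by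
        show l i₀ - t * (c i₀ : ℝ) = 0
        rw [htdef]
        field_simp
        ring
      have hs' : ∀ j, ∑ i, l' i * (q i j : ℝ) = (z j : ℝ) := by
        intro j
        have hcast : ∑ i, (c i : ℝ) * (q i j : ℝ) = 0 := by
          exact_mod_cast congrArg (Rat.cast : ℚ → ℝ) (hc0 j)
        rw [hl'def]
        simp only [sub_mul]
        rw [Finset.sum_sub_distrib]
        rw [hs j]
        have : ∑ i, t * (c i : ℝ) * (q i j : ℝ) = t * ∑ i, (c i : ℝ) * (q i j : ℝ) := by
          rw [Finset.mul_sum]; exact Finset.sum_congr rfl fun i _ => by ring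
        rw [this, hcast, mul_zero, sub_zero]
      obtain ⟨ν, hν0, hνs⟩ := ih (fun i => q (i₀.succAbove i)) z
        (fun i => l' (i₀.succAbove i)) (fun i => hl' _)
        (by
          intro j
          have := Fin.sum_univ_succAbove (fun i => l' i * (q i j : ℝ)) i₀
          rw [hl'i₀, zero_mul] at this
          rw [← hs' j, this, zero_add])
      refine ⟨Fin.insertNth (α := fun _ => ℚ) i₀ 0 ν, ?_, ?_⟩
      · intro i
        refine Fin.succAboveCases i₀ ?_ ?_ i
        · rw [Fin.insertNth_apply_same]
        · intro j
          rw [Fin.insertNth_apply_succAbove]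
          exact hν0 j
      · intro j
        have hkey : ∑ i : Fin (m+1), (Fin.insertNth (α := fun _ => ℚ) i₀ 0 ν) i * q i j
            = (Fin.insertNth (α := fun _ => ℚ) i₀ 0 ν) i₀ * q i₀ j
              + ∑ i : Fin m, (Fin.insertNth (α := fun _ => ℚ) i₀ 0 ν) (i₀.succAbove i) * q (i₀.succAbove i) j :=
          Fin.sum_univ_succAbove (fun i => (Fin.insertNth (α := fun _ => ℚ) i₀ 0 ν) i * q i j) i₀
        rw [hkey, Fin.insertNth_apply_same, zero_mul, zero_add]
        calc ∑ i : Fin m, (Fin.insertNth (α := fun _ => ℚ) i₀ 0 ν) (i₀.succAbove i) * q (i₀.succAbove i) j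
            = ∑ i : Fin m, ν i * q (i₀.succAbove i) j :=
              Finset.sum_congr rfl fun i _ => by rw [Fin.insertNth_apply_succAbove]
          _ = z j := hνs j


/-- If `Z ⊆ ℤ^d` contains `0`, is closed under addition, and contains `z` or `-z` for
every `z ∈ ℤ^d`, then either `Z = ℤ^d` or `Z` is contained in a closed half-space
`{q : q·p ≥ 0}` for some `p ≠ 0`. -/
theorem stmt2 (d : ℕ) (Z : Set (Fin d → ℤ)) (h0 : 0 ∈ Z)
    (hadd : ∀ z₁ ∈ Z, ∀ z₂ ∈ Z, z₁ + z₂ ∈ Z)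
    (hall : ∀ z : Fin d → ℤ, z ∈ Z ∨ -z ∈ Z) :
    Z = Set.univ ∨
      ∃ p : EuclideanSpace ℝ (Fin d), p ≠ 0 ∧ ∀ q ∈ Z, 0 ≤ ⟪vec q, p⟫ := by
  classical
  by_cases hex : ∃ p : EuclideanSpace ℝ (Fin d), p ≠ 0 ∧ ∀ q ∈ Z, 0 ≤ ⟪vec q, p⟫
  · exact Or.inr hex
  left
  push_neg at hex
  -- hex : ∀ p, p ≠ 0 → ∃ q ∈ Z, ⟪vec q, p⟫ < 0
  -- finite subcover of the sphere
  have hopen : ∀ w : Z, IsOpen {p : EuclideanSpace ℝ (Fin d) | ⟪vec (w : Fin d → ℤ), p⟫ < 0} :=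
    fun w => isOpen_lt (Continuous.inner continuous_const continuous_id) continuous_const
  have hcov : Metric.sphere (0 : EuclideanSpace ℝ (Fin d)) 1 ⊆
      ⋃ (w : Z), {p | ⟪vec (w : Fin d → ℤ), p⟫ < 0} := by
    intro p hp
    have hp0 : p ≠ 0 := by
      intro h
      rw [mem_sphere_zero_iff_norm, h, norm_zero] at hp
      norm_num at hp
    obtain ⟨qq, hqZ, hq⟩ := hex p hp0
    exact Set.mem_iUnion.2 ⟨⟨qq, hqZ⟩, hq⟩
  obtain ⟨t, ht⟩ := (isCompact_sphere (0 : EuclideanSpace ℝ (Fin d)) 1).elim_finite_subcover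
    _ hopen hcov
  set k := t.card with hk
  set e := t.equivFin with he
  set q : Fin k → (Fin d → ℤ) := fun i => (((e.symm i : t) : Z) : Fin d → ℤ) with hq
  have hqZ : ∀ i, q i ∈ Z := fun i => ((e.symm i : t) : Z).2
  have hneg : ∀ p : EuclideanSpace ℝ (Fin d), p ≠ 0 → ∃ i, ⟪vec (q i), p⟫ < 0 := by
    intro p hp
    have hn : ‖p‖ ≠ 0 := norm_ne_zero_iff.2 hp
    have hu : (‖p‖⁻¹ • p) ∈ Metric.sphere (0 : EuclideanSpace ℝ (Fin d)) 1 := by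
      rw [mem_sphere_zero_iff_norm, norm_smul, norm_inv, norm_norm, inv_mul_cancel₀ hn]
    have := ht hu
    simp only [Set.mem_iUnion] at this
    obtain ⟨w, hwt, hw⟩ := this
    refine ⟨e ⟨w, hwt⟩, ?_⟩
    have hqe : q (e ⟨w, hwt⟩) = (w : Fin d → ℤ) := by
      rw [hq]
      simp
    rw [hqe]
    have h1 : ⟪vec (w : Fin d → ℤ), ‖p‖⁻¹ • p⟫ < 0 := hw
    rw [real_inner_smul_right] at h1
    have hpos : 0 < ‖p‖⁻¹ := inv_pos.2 (norm_pos_iff.2 hp)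
    nlinarith
  -- the cone generated by the q i is everything
  have hC : ∀ x : EuclideanSpace ℝ (Fin d), ∃ l : Fin k → ℝ,
      (∀ i, 0 ≤ l i) ∧ ∀ j, ∑ i, l i * ((q i j : ℤ) : ℝ) = x j := by
    set C : Set (EuclideanSpace ℝ (Fin d)) := {x | ∃ l : Fin k → ℝ,
      (∀ i, 0 ≤ l i) ∧ ∀ j, ∑ i, l i * ((q i j : ℤ) : ℝ) = x j} with hCdef
    have h0C : (0 : EuclideanSpace ℝ (Fin d)) ∈ C := ⟨0, fun i => le_rfl, fun j => by simp⟩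
    have haddC : ∀ x ∈ C, ∀ y ∈ C, x + y ∈ C := by
      rintro x ⟨lx, hlx, hsx⟩ y ⟨ly, hly, hsy⟩
      refine ⟨fun i => lx i + ly i, fun i => add_nonneg (hlx i) (hly i), fun j => ?_⟩
      have : (x + y) j = x j + y j := rfl
      rw [this, ← hsx j, ← hsy j, ← Finset.sum_add_distrib]
      exact Finset.sum_congr rfl fun i _ => by ring
    have hsmulC : ∀ (a : ℝ), 0 ≤ a → ∀ x ∈ C, a • x ∈ C := by
      rintro a ha x ⟨lx, hlx, hsx⟩
      refine ⟨fun i => a * lx i, fun i => mul_nonneg ha (hlx i), fun j => ?_⟩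
      have : (a • x) j = a * x j := rfl
      rw [this, ← hsx j, Finset.mul_sum]
      exact Finset.sum_congr rfl fun i _ => by ring
    have hconv : Convex ℝ C := fun x hx y hy a b ha hb _ =>
      haddC _ (hsmulC a ha x hx) _ (hsmulC b hb y hy)
    by_contra hne
    push_neg at hne
    obtain ⟨x₀, hx₀⟩ := hne
    have hx₀C : x₀ ∉ C := by
      rintro ⟨l, hl, hsum⟩
      obtain ⟨j, hj⟩ := hx₀ l hl
      exact hj (hsum j)
    have hclne : closure C ≠ Set.univ := by
      intro hcl
      have hspan : affineSpan ℝ C = ⊤ := by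
        have h1 : closure C ⊆ (affineSpan ℝ C : Set (EuclideanSpace ℝ (Fin d))) :=
          closure_minimal (subset_affineSpan ℝ C)
            (affineSpan ℝ C).closed_of_finiteDimensional
        exact top_unique fun x _ => (hcl ▸ h1) (Set.mem_univ x)
      obtain ⟨y, hy⟩ := (hconv.interior_nonempty_iff_affineSpan_eq_top).2 hspan
      apply hx₀C
      have hw : (2:ℝ) • x₀ - y ∈ closure C := by rw [hcl]; trivial
      have hmem := hconv.combo_interior_closure_mem_interior hy hw
        (by norm_num : (0:ℝ) < 1/2) (by norm_num : (0:ℝ) ≤ 1/2) (by norm_num)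
      have heq : (1/2 : ℝ) • y + (1/2 : ℝ) • ((2:ℝ) • x₀ - y) = x₀ := by
        module
      exact interior_subset (heq ▸ hmem)
    obtain ⟨x₁, hx₁⟩ : ∃ x₁, x₁ ∉ closure C := by
      by_contra h; push_neg at h; exact hclne (Set.eq_univ_of_forall h)
    obtain ⟨f, u, hfu, hux⟩ := geometric_hahn_banach_closed_point hconv.closure
      isClosed_closure hx₁
    have hu0 : 0 < u := by
      have := hfu 0 (subset_closure h0C)
      rwa [map_zero] at this
    have hfC : ∀ x ∈ C, f x ≤ 0 := by
      intro x hx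
      by_contra h
      push_neg at h
      have hs : ((u+1)/f x) • x ∈ C := hsmulC _ (div_nonneg (by linarith) h.le) x hx
      have h2 := hfu _ (subset_closure hs)
      rw [_root_.map_smul, smul_eq_mul, div_mul_cancel₀ _ (ne_of_gt h)] at h2
      linarith
    set v := (InnerProductSpace.toDual ℝ (EuclideanSpace ℝ (Fin d))).symm f with hv
    have hvap : ∀ x, ⟪v, x⟫ = f x := fun x => InnerProductSpace.toDual_symm_apply
    have hvne : v ≠ 0 := by
      intro h
      have : f x₁ = 0 := by rw [← hvap x₁, h, inner_zero_left]
      linarith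
    obtain ⟨i, hi⟩ := hneg (-v) (neg_ne_zero.2 hvne)
    have hqiC : vec (q i) ∈ C := by
      refine ⟨fun i' => if i' = i then 1 else 0,
        fun i' => by by_cases h : i' = i <;> simp [h], fun j => ?_⟩
      have hterm : ∀ i', (if i' = i then (1:ℝ) else 0) * ((q i' j : ℤ) : ℝ)
          = if i' = i then ((q i' j : ℤ) : ℝ) else 0 := by
        intro i'; split <;> simp
      rw [Finset.sum_congr rfl fun i' _ => hterm i',
        Finset.sum_ite_eq' Finset.univ i (fun i' => ((q i' j : ℤ) : ℝ))]
      simp only [Finset.mem_univ, if_pos]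
      rfl
    have h2 : f (vec (q i)) ≤ 0 := hfC _ hqiC
    rw [inner_neg_right, real_inner_comm, hvap] at hi
    linarith
  -- now show Z = univ
  rw [Set.eq_univ_iff_forall]
  intro z
  obtain ⟨l, hl0, hlsum⟩ := hC (vec z)
  obtain ⟨μ, hμ0, hμs⟩ := ratLP k (fun i j => ((q i j : ℤ) : ℚ)) (fun j => ((z j : ℤ) : ℚ))
    l hl0 (by
      intro j
      push_cast
      have := hlsum j
      exact_mod_cast this)
  set N : ℕ := ∏ i, (μ i).den with hN
  have hNpos : 0 < N := Finset.prod_pos fun i _ => (μ i).pos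
  have hint : ∀ i, ∃ n : ℕ, (μ i) * (N : ℚ) = (n : ℚ) := by
    intro i
    obtain ⟨M, hM⟩ : ((μ i).den : ℕ) ∣ N := Finset.dvd_prod_of_mem _ (Finset.mem_univ i)
    refine ⟨(μ i).num.toNat * M, ?_⟩
    have hnum : 0 ≤ (μ i).num := Rat.num_nonneg.2 (hμ0 i)
    have htn : (((μ i).num.toNat : ℕ) : ℚ) = ((μ i).num : ℚ) := by
      exact_mod_cast Int.toNat_of_nonneg hnum
    rw [hM]
    push_cast [htn]
    rw [← mul_assoc, Rat.mul_den_eq_num]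
  choose n hn using hint
  have hZq : ∀ j, (∑ i, (n i : ℤ) * q i j) = (N : ℤ) * z j := by
    intro j
    have h2 : (∑ i, μ i * ((q i j : ℤ) : ℚ)) * (N : ℚ) = ((z j : ℤ) : ℚ) * (N : ℚ) := by
      rw [hμs j]
    rw [Finset.sum_mul] at h2
    have h3 : ∑ i, (n i : ℚ) * ((q i j : ℤ) : ℚ) = ((z j : ℤ) : ℚ) * (N : ℚ) := by
      rw [← h2]
      exact Finset.sum_congr rfl fun i _ => by rw [← hn i]; ring
    have h4 : (∑ i, (n i : ℤ) * q i j) = z j * (N : ℤ) := by exact_mod_cast h3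
    rw [h4]; ring
  -- membership via submonoid structure
  let M : AddSubmonoid (Fin d → ℤ) :=
    { carrier := Z
      add_mem' := fun ha hb => hadd _ ha _ hb
      zero_mem' := h0 }
  have hsZ : (∑ i, (n i) • q i) ∈ Z := by
    show (∑ i, (n i) • q i) ∈ M
    exact sum_mem fun i _ => nsmul_mem (show q i ∈ M from hqZ i) (n i)
  have haZ : (fun j => (N : ℤ) * z j) ∈ Z := by
    have : (fun j => (N : ℤ) * z j) = ∑ i, (n i) • q i := by
      funext j
      rw [← hZq j, Finset.sum_apply]
      exact Finset.sum_congr rfl fun i _ => by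
        simp [nsmul_eq_mul]
    rw [this]
    exact hsZ
  rcases hall z with hz | hz
  · exact hz
  · have hbZ : (fun j => ((N : ℤ) - 1) * (-(z j))) ∈ Z := by
      have : (fun j => ((N : ℤ) - 1) * (-(z j))) = (N - 1) • (-z) := by
        funext j
        have : ((N - 1 : ℕ) : ℤ) = (N : ℤ) - 1 := by
          push_cast [Nat.cast_sub hNpos]
          ring
        simp [nsmul_eq_mul, this]
      rw [this]
      show ((N - 1) • (-z)) ∈ M
      exact nsmul_mem (show -z ∈ M from hz) (N - 1)
    have hzeq : z = (fun j => (N : ℤ) * z j) + (fun j => ((N : ℤ) - 1) * (-(z j))) := by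
      funext j
      show z j = (N : ℤ) * z j + ((N : ℤ) - 1) * (-(z j))
      ring
    rw [hzeq]
    exact hadd _ haZ _ hbZ
end

section
/- Let p ∈ ℝ^d and let E ⊆ ℝ^d satisfy E + q ⊆ E for every q ∈ ℤ^d with q·p > 0. If a + [0,1)^d ⊆ E for some a ∈ ℝ^d, then E contains the half-space {x ∈ ℝ^d : x·p > a·p + Σ_{i=1}^d |p_i|}. -/
open scoped RealInnerProductSpace

/-- The half-open unit cube `[0,1)^d` in `ℝ^d`. -/
def cube (d : ℕ) : Set (EuclideanSpace ℝ (Fin d)) :=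
  {r | ∀ i, r i ∈ Set.Ico (0 : ℝ) 1}

/-- If `E + q ⊆ E` whenever `q·p > 0` and `E` contains a half-open unit cube
`a + [0,1)^d`, then `E` contains the half-space `{x : x·p > a·p + Σᵢ |pᵢ|}`. -/
theorem stmt5 (d : ℕ) (p : EuclideanSpace ℝ (Fin d)) (E : Set (EuclideanSpace ℝ (Fin d)))
    (hE : ∀ q : Fin d → ℤ, 0 < ⟪vec q, p⟫ → transl E q ⊆ E)
    (a : EuclideanSpace ℝ (Fin d)) (ha : (fun r => a + r) '' cube d ⊆ E) :
    {x : EuclideanSpace ℝ (Fin d) | ⟪a, p⟫ + ∑ i, |p i| < ⟪x, p⟫} ⊆ E := by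
  intro x hx
  simp only [Set.mem_setOf_eq] at hx
  set q : Fin d → ℤ := fun i => ⌊x i - a i⌋ with hq
  set r : EuclideanSpace ℝ (Fin d) := WithLp.toLp 2 (fun i => Int.fract (x i - a i)) with hr
  have hxeq : x = (a + r) + vec q := by
    ext i
    simp only [PiLp.add_apply, hr, vec, hq, PiLp.toLp_apply]
    rw [Int.fract]
    ring
  have hrcube : r ∈ cube d := by
    intro i
    exact ⟨Int.fract_nonneg _, Int.fract_lt_one _⟩
  have hinner : ∀ y z : EuclideanSpace ℝ (Fin d), ⟪y, z⟫ = ∑ i, y i * z i := by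
    intro y z
    simp [PiLp.inner_apply, RCLike.inner_apply, mul_comm]
  have hrp : ⟪r, p⟫ ≤ ∑ i, |p i| := by
    rw [hinner]
    apply Finset.sum_le_sum
    intro i _
    calc r i * p i ≤ |r i * p i| := le_abs_self _
      _ = |r i| * |p i| := abs_mul _ _
      _ ≤ 1 * |p i| := by
          apply mul_le_mul_of_nonneg_right _ (abs_nonneg _)
          rw [abs_of_nonneg (hrcube i).1]
          exact le_of_lt (hrcube i).2
      _ = |p i| := one_mul _
  have hsplit : ⟪x, p⟫ = ⟪a, p⟫ + ⟪r, p⟫ + ⟪vec q, p⟫ := by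
    rw [hxeq, inner_add_left, inner_add_left]
  have hqp : 0 < ⟪vec q, p⟫ := by
    have := hx
    rw [hsplit] at this
    linarith
  apply hE q hqp
  rw [hxeq]
  exact ⟨a + r, ha ⟨r, hrcube, rfl⟩, rfl⟩
end

section
/- Let p ∈ ℝ^d and let E ⊆ ℝ^d satisfy E ⊆ E + q for every q ∈ ℤ^d with q·p < 0. If (a + [0,1)^d) ∩ E = ∅ for some a ∈ ℝ^d, then E ∩ {x ∈ ℝ^d : x·p < a·p − Σ_{i=1}^d |p_i|} = ∅. -/
open scoped RealInnerProductSpace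

/-- If `E ⊆ E + q` whenever `q·p < 0` and `E` avoids a half-open unit cube
`a + [0,1)^d`, then `E` avoids the half-space `{x : x·p < a·p − Σᵢ |pᵢ|}`. -/
theorem stmt6 (d : ℕ) (p : EuclideanSpace ℝ (Fin d)) (E : Set (EuclideanSpace ℝ (Fin d)))
    (hE : ∀ q : Fin d → ℤ, ⟪vec q, p⟫ < 0 → E ⊆ transl E q)
    (a : EuclideanSpace ℝ (Fin d)) (ha : ((fun r => a + r) '' cube d) ∩ E = ∅) :
    E ∩ {x : EuclideanSpace ℝ (Fin d) | ⟪x, p⟫ < ⟪a, p⟫ - ∑ i, |p i|} = ∅ := by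
  have hinner : ∀ (u v : EuclideanSpace ℝ (Fin d)), ⟪u, v⟫ = ∑ i, u i * v i := by
    intro u v
    simp [PiLp.inner_apply, RCLike.inner_apply, mul_comm]
  ext x
  simp only [Set.mem_inter_iff, Set.mem_setOf_eq, Set.mem_empty_iff_false, iff_false, not_and]
  intro hx hxp
  set q : Fin d → ℤ := fun i => ⌊x i - a i⌋ with hq
  have hqp : ⟪vec q, p⟫ < 0 := by
    have h1 : ∀ i, (q i : ℝ) * p i ≤ (x i - a i) * p i + |p i| := by
      intro i
      have h2 : (q i : ℝ) ≤ x i - a i := Int.floor_le _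
      have h3 : x i - a i - 1 < (q i : ℝ) := Int.sub_one_lt_floor _
      rcases le_or_gt 0 (p i) with h | h
      · nlinarith [le_abs_self (p i)]
      · nlinarith [neg_abs_le (p i)]
    calc ⟪vec q, p⟫ = ∑ i, (q i : ℝ) * p i := by simp [hinner, vec]
      _ ≤ ∑ i, ((x i - a i) * p i + |p i|) := Finset.sum_le_sum fun i _ => h1 i
      _ = ⟪x, p⟫ - ⟪a, p⟫ + ∑ i, |p i| := by
          rw [hinner, hinner, Finset.sum_add_distrib, ← Finset.sum_sub_distrib]
          simp [sub_mul]
      _ < 0 := by linarith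
  obtain ⟨y, hy, hyx⟩ := hE q hqp hx
  have hyx' : ∀ i, y i = x i - (q i : ℝ) := by
    intro i
    have := congrArg (fun z : EuclideanSpace ℝ (Fin d) => z i) hyx
    simp only [vec] at this
    have h2 : y i + (q i : ℝ) = x i := this
    linarith
  have hy' : y ∈ (fun r => a + r) '' cube d := by
    refine ⟨y - a, fun i => ?_, by module⟩
    have h1 : (y - a) i = y i - a i := rfl
    rw [h1, hyx']
    constructor
    · have := Int.floor_le (x i - a i); simp only [hq]; linarith
    · have := Int.sub_one_lt_floor (x i - a i); simp only [hq]; linarith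
  exact Set.eq_empty_iff_forall_notMem.mp ha y ⟨hy', hy⟩
end

section
/- Let E_n (n ∈ ℕ) and E be open subsets of ℝ^d and let γ > 0 be such that: (i) for every n, every x ∈ closure(E_n) and every r > 0, |B_r(x) ∩ E_n| ≥ γ r^d, and for every x ∉ E_n and every r > 0, |B_r(x) \ E_n| ≥ γ r^d; (ii) the set E satisfies the same two density estimates; (iii) for every R > 0, the Lebesgue measure |(E_n Δ E) ∩ B_R(0)| tends to 0 as n → ∞. Then the topological boundaries ∂E_n converge to ∂E in the Kuratowski (local Hausdorff) sense: for every ε > 0 and R > 0 there is N such that for all n ≥ N, ∂E_n ∩ B_R(0) ⊆ ⋃_{y ∈ ∂E} B_ε(y) and ∂E ∩ B_R(0) ⊆ ⋃_{y ∈ ∂E_n} B_ε(y). -/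
open MeasureTheory

open Set in
lemma aux7 {d : ℕ} {A B : Set (EuclideanSpace ℝ (Fin d))}
    (hA : IsOpen A) (hB : IsOpen B) {γ : ℝ}
    (hinA : ∀ x ∈ closure A, ∀ r > (0 : ℝ),
      ENNReal.ofReal (γ * r ^ d) ≤ volume (Metric.ball x r ∩ A))
    (houtA : ∀ x ∉ A, ∀ r > (0 : ℝ),
      ENNReal.ofReal (γ * r ^ d) ≤ volume (Metric.ball x r \ A))
    {x : EuclideanSpace ℝ (Fin d)} (hx : x ∈ frontier A) {R ε : ℝ}
    (hxR : x ∈ Metric.ball 0 R) (hε : 0 < ε)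
    (hdisj : Disjoint (Metric.ball x ε) (frontier B)) :
    ENNReal.ofReal (γ * (ε/2) ^ d) ≤
      volume (((A \ B) ∪ (B \ A)) ∩ Metric.ball 0 (R + ε)) := by
  have hxcl : x ∈ closure A := hx.1
  have hxA : x ∉ A := by
    intro h; exact hx.2 (by rwa [hA.interior_eq])
  have hr : (0:ℝ) < ε/2 := by linarith
  have hball : Metric.ball x (ε/2) ⊆ Metric.ball 0 (R + ε) := by
    intro y hy
    have h1 : dist y x < ε/2 := Metric.mem_ball.mp hy
    have h2 : dist x 0 < R := Metric.mem_ball.mp hxR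
    have := dist_triangle y x 0
    exact Metric.mem_ball.mpr (by linarith)
  have hsub : Metric.ball x ε ⊆ B ∪ (closure B)ᶜ := by
    intro y hy
    by_cases h : y ∈ B
    · exact Or.inl h
    · right
      intro hyc
      exact hdisj.ne_of_mem hy ⟨hyc, by rwa [hB.interior_eq]⟩ rfl
  have hconn : IsPreconnected (Metric.ball x ε) := (convex_ball x ε).isPreconnected
  rcases hconn.subset_or_subset hB (isClosed_closure.isOpen_compl)
      (disjoint_compl_right.mono_left subset_closure) hsub with hcase | hcase
  · refine le_trans (houtA x hxA (ε/2) hr) (measure_mono ?_)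
    intro y hy
    exact ⟨Or.inr ⟨hcase (Metric.ball_subset_ball (by linarith) hy.1), hy.2⟩, hball hy.1⟩
  · refine le_trans (hinA x hxcl (ε/2) hr) (measure_mono ?_)
    intro y hy
    exact ⟨Or.inl ⟨hy.2, fun h => hcase (Metric.ball_subset_ball (by linarith) hy.1)
      (subset_closure h)⟩, hball hy.1⟩

/-- Kuratowski (local Hausdorff) convergence of boundaries: if open sets `Eₙ` and `E`
satisfy uniform interior/exterior density estimates with constant `γ > 0`, and
`|(Eₙ Δ E) ∩ B_R(0)| → 0` for every `R > 0`, then for every `ε > 0` and `R > 0` the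
boundaries `∂Eₙ ∩ B_R(0)` and `∂E ∩ B_R(0)` are eventually within `ε` of each other. -/
theorem stmt7 (d : ℕ) (En : ℕ → Set (EuclideanSpace ℝ (Fin d)))
    (E : Set (EuclideanSpace ℝ (Fin d)))
    (hEnopen : ∀ n, IsOpen (En n)) (hEopen : IsOpen E)
    (γ : ℝ) (hγ : 0 < γ)
    (hin : ∀ n, ∀ x ∈ closure (En n), ∀ r > (0 : ℝ),
      ENNReal.ofReal (γ * r ^ d) ≤ volume (Metric.ball x r ∩ En n))
    (hout : ∀ n, ∀ x ∉ En n, ∀ r > (0 : ℝ),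
      ENNReal.ofReal (γ * r ^ d) ≤ volume (Metric.ball x r \ En n))
    (hin' : ∀ x ∈ closure E, ∀ r > (0 : ℝ),
      ENNReal.ofReal (γ * r ^ d) ≤ volume (Metric.ball x r ∩ E))
    (hout' : ∀ x ∉ E, ∀ r > (0 : ℝ),
      ENNReal.ofReal (γ * r ^ d) ≤ volume (Metric.ball x r \ E))
    (hconv : ∀ R > (0 : ℝ), Filter.Tendsto
      (fun n => volume (((En n \ E) ∪ (E \ En n)) ∩ Metric.ball 0 R))
      Filter.atTop (nhds 0)) :
    ∀ ε > (0 : ℝ), ∀ R > (0 : ℝ), ∃ N : ℕ, ∀ n ≥ N,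
      (frontier (En n) ∩ Metric.ball 0 R ⊆ ⋃ y ∈ frontier E, Metric.ball y ε) ∧
      (frontier E ∩ Metric.ball 0 R ⊆ ⋃ y ∈ frontier (En n), Metric.ball y ε) := by
  intro ε hε R hR
  set c : ENNReal := ENNReal.ofReal (γ * (ε/2) ^ d) with hc
  have hcpos : 0 < c := by
    apply ENNReal.ofReal_pos.mpr
    positivity
  have hev : ∀ᶠ n in Filter.atTop,
      volume (((En n \ E) ∪ (E \ En n)) ∩ Metric.ball 0 (R + ε)) < c :=
    (hconv (R + ε) (by linarith)).eventually (gt_mem_nhds hcpos)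
  obtain ⟨N, hN⟩ := Filter.eventually_atTop.mp hev
  refine ⟨N, fun n hn => ⟨?_, ?_⟩⟩
  · intro x ⟨hxf, hxR⟩
    by_contra hxmem
    have hdisj : Disjoint (Metric.ball x ε) (frontier E) := by
      rw [Set.disjoint_left]
      intro z hz hzf
      exact hxmem (Set.mem_iUnion₂.mpr ⟨z, hzf,
        Metric.mem_ball.mpr (by rw [dist_comm]; exact Metric.mem_ball.mp hz)⟩)
    exact absurd (aux7 (hEnopen n) hEopen (hin n) (hout n) hxf hxR hε hdisj)
      (not_le.mpr (hN n hn))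
  · intro x ⟨hxf, hxR⟩
    by_contra hxmem
    have hdisj : Disjoint (Metric.ball x ε) (frontier (En n)) := by
      rw [Set.disjoint_left]
      intro z hz hzf
      exact hxmem (Set.mem_iUnion₂.mpr ⟨z, hzf,
        Metric.mem_ball.mpr (by rw [dist_comm]; exact Metric.mem_ball.mp hz)⟩)
    have := aux7 hEopen (hEnopen n) hin' hout' hxf hxR hε hdisj
    rw [Set.union_comm] at this
    exact absurd this (not_le.mpr (hN n hn))
end

section
/- Let F : ℝ^d → ℝ be convex, positively one-homogeneous, satisfy c₀|y| ≤ F(y) ≤ c₀⁻¹|y| for all y and some c₀ > 0, be differentiable on ℝ^d \ {0}, and be uniformly convex in the sense that there exists C > 0 with F(y)² ≥ F(z)² + 2 F(z) ⟨∇F(z), y − z⟩ + C|y − z|² for all y ∈ ℝ^d and z ≠ 0. Let ∂W := {y ∈ ℝ^d : F(y) = 1}. If η is a Borel probability measure on ℝ^d concentrated on ∂W whose barycenter θ := ∫_{ℝ^d} y dη(y) satisfies F(θ) = 1, then η is the Dirac mass δ_θ. -/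
open MeasureTheory
open scoped RealInnerProductSpace

/-- If `F` is a convex, positively one-homogeneous, coercive, differentiable (away from
`0`) and uniformly convex anisotropy, and `η` is a Borel probability measure concentrated
on the unit sphere `{F = 1}` whose barycenter `θ` satisfies `F(θ) = 1`, then `η` is the
Dirac mass at `θ`. -/
theorem stmt10 (d : ℕ) (F : EuclideanSpace ℝ (Fin d) → ℝ)
    (c₀ : ℝ) (hc₀ : 0 < c₀)
    (hconv : ConvexOn ℝ Set.univ F)
    (hhom : ∀ lam : ℝ, 0 < lam → ∀ y, F (lam • y) = lam * F y)
    (hbound : ∀ y, c₀ * ‖y‖ ≤ F y ∧ F y ≤ c₀⁻¹ * ‖y‖)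
    (hdiff : ∀ z : EuclideanSpace ℝ (Fin d), z ≠ 0 → DifferentiableAt ℝ F z)
    (C : ℝ) (hC : 0 < C)
    (huc : ∀ y z : EuclideanSpace ℝ (Fin d), z ≠ 0 →
      F z ^ 2 + 2 * F z * ⟪gradient F z, y - z⟫ + C * ‖y - z‖ ^ 2 ≤ F y ^ 2)
    (η : Measure (EuclideanSpace ℝ (Fin d))) [IsProbabilityMeasure η]
    (hconc : η {y | F y ≠ 1} = 0)
    (θ : EuclideanSpace ℝ (Fin d)) (hθ : θ = ∫ y, y ∂η) (hFθ : F θ = 1) :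
    η = Measure.dirac θ := by

  classical
  have hθ0 : θ ≠ 0 := by
    intro h
    have h2 := (hbound θ).2
    rw [hFθ, h] at h2
    simp at h2
    linarith
  set g := gradient F θ with hg
  have hae1 : ∀ᵐ y ∂η, F y = 1 := by
    rw [MeasureTheory.ae_iff]
    exact hconc
  have hbnd : ∀ᵐ y ∂η, ‖y‖ ≤ c₀⁻¹ := by
    filter_upwards [hae1] with y hy
    have h1 := (hbound y).1
    rw [hy] at h1
    rw [← one_div]
    rw [le_div_iff₀ hc₀]
    linarith
  have hIntId : Integrable (fun y => y) η :=
    Integrable.mono' (integrable_const c₀⁻¹) aestronglyMeasurable_id hbnd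
  have hIntSub : Integrable (fun y => y - θ) η := hIntId.sub (integrable_const θ)
  have hIntsq : Integrable (fun y => ‖y - θ‖ ^ 2) η := by
    apply Integrable.mono' (integrable_const ((c₀⁻¹ + ‖θ‖) ^ 2))
    · exact (continuous_norm.comp (continuous_id.sub continuous_const)).pow 2
        |>.aestronglyMeasurable
    · filter_upwards [hbnd] with y hy
      have h1 : ‖y - θ‖ ≤ c₀⁻¹ + ‖θ‖ := (norm_sub_le y θ).trans (by linarith)
      have h2 : (0:ℝ) ≤ ‖y - θ‖ := norm_nonneg _
      rw [Real.norm_eq_abs, abs_of_nonneg (by positivity)]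
      nlinarith
  have hIntinner : Integrable (fun y => ⟪g, y - θ⟫) η := hIntSub.const_inner g
  have hint0 : ∫ y, ⟪g, y - θ⟫ ∂η = 0 := by
    rw [integral_inner hIntSub]
    have hz : ∫ y, (y - θ) ∂η = 0 := by
      rw [integral_sub hIntId (integrable_const θ), integral_const]
      simp [hθ]
    rw [hz, inner_zero_right]
  have hae2 : ∀ᵐ y ∂η, 2 * ⟪g, y - θ⟫ + C * ‖y - θ‖ ^ 2 ≤ 0 := by
    filter_upwards [hae1] with y hy
    have h := huc y θ hθ0
    rw [hFθ, hy] at h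
    nlinarith
  have hIle : ∫ y, (2 * ⟪g, y - θ⟫ + C * ‖y - θ‖ ^ 2) ∂η ≤ 0 :=
    integral_nonpos_of_ae hae2
  rw [integral_add (hIntinner.const_mul 2) (hIntsq.const_mul C),
    integral_const_mul, integral_const_mul, hint0, mul_zero, zero_add] at hIle
  have hnn : 0 ≤ ∫ y, ‖y - θ‖ ^ 2 ∂η := integral_nonneg fun y => by positivity
  have hIz : ∫ y, ‖y - θ‖ ^ 2 ∂η = 0 := by nlinarith
  have haeq : ∀ᵐ y ∂η, y = θ := by
    have h0 : (fun y => ‖y - θ‖ ^ 2) =ᵐ[η] 0 :=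
      (integral_eq_zero_iff_of_nonneg (fun y => by positivity) hIntsq).mp hIz
    filter_upwards [h0] with y hy
    have : ‖y - θ‖ = 0 := by
      have := hy
      simp only [Pi.zero_apply] at this
      nlinarith [norm_nonneg (y - θ)]
    rwa [norm_eq_zero, sub_eq_zero] at this
  calc η = Measure.map id η := Measure.map_id.symm
    _ = Measure.map (fun _ => θ) η := Measure.map_congr haeq
    _ = Measure.dirac θ := by simp [Measure.map_const]
end

section
/- Let F : ℝ^d × ℝ^d → ℝ be continuous, and for each x let F(x, ·) be convex and positively one-homogeneous. Let M > 0 and let z_n, z : ℝ^d → ℝ^d be measurable with |z_n(x)| ≤ M and |z(x)| ≤ M for a.e. x. Assume that for each n one has ⟨z_n(x), q⟩ ≤ F(x, q) for a.e. x ∈ ℝ^d and every q ∈ ℝ^d, and that for every open ball B ⊆ ℝ^d and every q ∈ ℝ^d, ∫_B ⟨z_n(x), q⟩ dx → ∫_B ⟨z(x), q⟩ dx as n → ∞. Then ⟨z(x), q⟩ ≤ F(x, q) for a.e. x ∈ ℝ^d and every q ∈ ℝ^d. -/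
open MeasureTheory
open scoped RealInnerProductSpace

section Aux

variable {d : ℕ}

/-- A bounded measurable function is locally integrable. -/
lemma aux_locInt_inner {z : EuclideanSpace ℝ (Fin d) → EuclideanSpace ℝ (Fin d)}
    (hzmeas : Measurable z) {M : ℝ} (hzbound : ∀ᵐ x ∂volume, ‖z x‖ ≤ M)
    (q : EuclideanSpace ℝ (Fin d)) :
    LocallyIntegrable (fun x => ⟪z x, q⟫) volume := by
  refine (locallyIntegrable_const (M * ‖q‖)).mono ?_ ?_
  · exact (((Continuous.inner continuous_fst continuous_snd).measurable).comp
      (hzmeas.prodMk measurable_const)).aestronglyMeasurable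
  · filter_upwards [hzbound] with x hx
    calc ‖⟪z x, q⟫‖ ≤ ‖z x‖ * ‖q‖ := norm_inner_le_norm _ _
      _ ≤ M * ‖q‖ := by
          have : ‖q‖ ≥ 0 := norm_nonneg q
          nlinarith [norm_nonneg (z x)]
      _ ≤ ‖M * ‖q‖‖ := le_abs_self _

end Aux

/-- The pointwise constraint `⟨z(x), q⟩ ≤ F(x, q)` (i.e. `F°(x, z(x)) ≤ 1`) is preserved
under weak-* convergence of uniformly bounded vector fields `zₙ ⇀ z`. -/
theorem stmt12 (d : ℕ)
    (F : EuclideanSpace ℝ (Fin d) → EuclideanSpace ℝ (Fin d) → ℝ)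
    (hFcont : Continuous fun pr : EuclideanSpace ℝ (Fin d) × EuclideanSpace ℝ (Fin d) =>
      F pr.1 pr.2)
    (hFconv : ∀ x, ConvexOn ℝ Set.univ (F x))
    (hFhom : ∀ x, ∀ lam : ℝ, 0 < lam → ∀ q, F x (lam • q) = lam * F x q)
    (M : ℝ) (hM : 0 < M)
    (zn : ℕ → EuclideanSpace ℝ (Fin d) → EuclideanSpace ℝ (Fin d))
    (z : EuclideanSpace ℝ (Fin d) → EuclideanSpace ℝ (Fin d))
    (hznmeas : ∀ n, Measurable (zn n)) (hzmeas : Measurable z)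
    (hznbound : ∀ n, ∀ᵐ x ∂volume, ‖zn n x‖ ≤ M)
    (hzbound : ∀ᵐ x ∂volume, ‖z x‖ ≤ M)
    (hconstraint : ∀ n, ∀ᵐ x ∂volume, ∀ q, ⟪zn n x, q⟫ ≤ F x q)
    (hweak : ∀ (c : EuclideanSpace ℝ (Fin d)) (r : ℝ), 0 < r →
      ∀ q : EuclideanSpace ℝ (Fin d),
      Filter.Tendsto (fun n => ∫ x in Metric.ball c r, ⟪zn n x, q⟫ ∂volume)
        Filter.atTop (nhds (∫ x in Metric.ball c r, ⟪z x, q⟫ ∂volume))) :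
    ∀ᵐ x ∂volume, ∀ q, ⟪z x, q⟫ ≤ F x q := by
  -- continuity of F x in each argument
  have hFq : ∀ q, Continuous fun x => F x q := fun q =>
    hFcont.comp (continuous_id.prodMk continuous_const)
  -- Step 1: for each fixed q, the conclusion holds a.e.
  have key : ∀ q, ∀ᵐ x ∂volume, ⟪z x, q⟫ ≤ F x q := by
    intro q
    -- integral inequality on balls
    have hball : ∀ (c : EuclideanSpace ℝ (Fin d)) (r : ℝ), 0 < r →
        ∫ x in Metric.ball c r, ⟪z x, q⟫ ∂volume ≤
          ∫ x in Metric.ball c r, F x q ∂volume := by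
      intro c r hr
      refine le_of_tendsto (hweak c r hr q) ?_
      filter_upwards with n
      have hint1 : IntegrableOn (fun x => ⟪zn n x, q⟫) (Metric.ball c r) volume :=
        ((aux_locInt_inner (hznmeas n) (hznbound n) q).integrableOn_isCompact
          (isCompact_closedBall c r)).mono_set Metric.ball_subset_closedBall
      have hint2 : IntegrableOn (fun x => F x q) (Metric.ball c r) volume :=
        (((hFq q).locallyIntegrable).integrableOn_isCompact
          (isCompact_closedBall c r)).mono_set Metric.ball_subset_closedBall
      refine setIntegral_mono_ae hint1 hint2 ?_
      filter_upwards [hconstraint n] with x hx using hx q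
    -- the nonnegative locally integrable function
    set g : EuclideanSpace ℝ (Fin d) → ℝ := fun x => F x q - ⟪z x, q⟫ with hg
    have hgloc : LocallyIntegrable g volume :=
      ((hFq q).locallyIntegrable).sub (aux_locInt_inner hzmeas hzbound q)
    -- averages over closed balls are nonneg
    have havg : ∀ (x : EuclideanSpace ℝ (Fin d)) (ρ : ℝ), 0 < ρ →
        0 ≤ ⨍ y in Metric.closedBall x ρ, g y ∂volume := by
      intro x ρ hρ
      have hle : (0:ℝ) ≤ ∫ y in Metric.closedBall x ρ, g y ∂volume := by
        have hcongr : ∫ y in Metric.closedBall x ρ, g y ∂volume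
            = ∫ y in Metric.ball x ρ, g y ∂volume := by
          refine setIntegral_congr_set ?_
          have hsph : volume (Metric.sphere x ρ) = 0 :=
            Measure.addHaar_sphere_of_ne_zero volume x (ne_of_gt hρ)
          have : Metric.closedBall x ρ =ᵐ[volume] Metric.ball x ρ := by
            refine Filter.eventuallyEq_of_mem (s := (Metric.sphere x ρ)ᶜ) ?_ ?_
            · rw [mem_ae_iff]; simpa using hsph
            · intro y hy
              simp only [Set.mem_compl_iff, Metric.mem_sphere] at hy
              simp only [eq_iff_iff]
              constructor
              · intro h; exact Metric.mem_ball.2 (lt_of_le_of_ne (Metric.mem_closedBall.1 h) hy)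
              · intro h; exact Metric.ball_subset_closedBall h
          exact this
        rw [hcongr]
        have := hball x ρ hρ
        have hint2 : IntegrableOn (fun y => F y q) (Metric.ball x ρ) volume :=
          (((hFq q).locallyIntegrable).integrableOn_isCompact
            (isCompact_closedBall x ρ)).mono_set Metric.ball_subset_closedBall
        have hint1 : IntegrableOn (fun y => ⟪z y, q⟫) (Metric.ball x ρ) volume :=
          ((aux_locInt_inner hzmeas hzbound q).integrableOn_isCompact
            (isCompact_closedBall x ρ)).mono_set Metric.ball_subset_closedBall
        have : ∫ y in Metric.ball x ρ, g y ∂volume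
            = (∫ y in Metric.ball x ρ, F y q ∂volume)
              - ∫ y in Metric.ball x ρ, ⟪z y, q⟫ ∂volume := by
          simpa [hg] using integral_sub hint2 hint1
        rw [this]
        linarith [hball x ρ hρ]
      unfold average
      rw [integral_smul_measure]
      exact smul_nonneg ENNReal.toReal_nonneg hle
    -- Lebesgue differentiation
    filter_upwards [IsUnifLocDoublingMeasure.ae_tendsto_average
      (μ := (volume : Measure (EuclideanSpace ℝ (Fin d)))) hgloc 1] with x hx
    have htend : Filter.Tendsto (fun ρ : ℝ => ⨍ y in Metric.closedBall x ρ, g y ∂volume)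
        (nhdsWithin 0 (Set.Ioi 0)) (nhds (g x)) := by
      refine hx (fun _ => x) (fun ρ => ρ) Filter.tendsto_id ?_
      filter_upwards [self_mem_nhdsWithin] with ρ (hρ : ρ ∈ Set.Ioi 0)
      simp [le_of_lt (Set.mem_Ioi.1 hρ)]
    have : 0 ≤ g x := by
      refine ge_of_tendsto htend ?_
      filter_upwards [self_mem_nhdsWithin] with ρ (hρ : ρ ∈ Set.Ioi 0)
      exact havg x ρ hρ
    simpa [hg] using this
  -- Step 2: upgrade to all q simultaneously using a countable dense set
  obtain ⟨s, hs_count, hs_dense⟩ :=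
    TopologicalSpace.exists_countable_dense (EuclideanSpace ℝ (Fin d))
  have hall : ∀ᵐ x ∂volume, ∀ q ∈ s, ⟪z x, q⟫ ≤ F x q :=
    (ae_ball_iff hs_count).2 fun q _ => key q
  filter_upwards [hall] with x hx q
  have hC : IsClosed {p : EuclideanSpace ℝ (Fin d) | ⟪z x, p⟫ ≤ F x p} := by
    refine isClosed_le ?_ ?_
    · exact continuous_const.inner continuous_id
    · exact hFcont.comp (continuous_const.prodMk continuous_id)
  have hsub : s ⊆ {p : EuclideanSpace ℝ (Fin d) | ⟪z x, p⟫ ≤ F x p} := fun p hp => hx p hp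
  have : (Set.univ : Set (EuclideanSpace ℝ (Fin d)))
      ⊆ {p | ⟪z x, p⟫ ≤ F x p} := by
    rw [← hs_dense.closure_eq]
    exact hC.closure_subset_iff.2 hsub
  exact this (Set.mem_univ q)
end

section
/- Let p ∈ ℝ^d with |p| = 1, let M > 0, a ∈ ℝ, and let E ⊆ ℝ^d satisfy {x : x·p > a + M} ⊆ E ⊆ {x : x·p > a − M} together with the strong Birkhoff property in the direction p: E + q ⊆ E for every q ∈ ℤ^d with q·p ≥ 0. Then for every x ∈ ℝ^d the set {q·p : q ∈ ℤ^d, x ∈ E + q} is nonempty and bounded above, so v(x) := sup{q·p : q ∈ ℤ^d, x ∈ E + q} is a well-defined real number, and for every q ∈ ℤ^d one has {x : v(x) > q·p} ⊆ E + q ⊆ {x : v(x) ≥ q·p}. -/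
open scoped RealInnerProductSpace

lemma mem_transl {d : ℕ} {E : Set (EuclideanSpace ℝ (Fin d))} {q : Fin d → ℤ}
    {x : EuclideanSpace ℝ (Fin d)} : x ∈ transl E q ↔ x - vec q ∈ E := by
  constructor
  · rintro ⟨y, hy, rfl⟩; simpa using hy
  · intro h; exact ⟨x - vec q, h, by simp⟩

lemma vec_sub {d : ℕ} (q q' : Fin d → ℤ) : vec (q - q') = vec q - vec q' := by
  ext i
  simp [vec]

/-- For a plane-like set `E` in the unit direction `p` with the strong Birkhoff
property, the set `{q·p : q ∈ ℤ^d, x ∈ E + q}` is nonempty and bounded above for every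
`x`, so its supremum `v(x)` is a well-defined real number, and
`{v > q·p} ⊆ E + q ⊆ {v ≥ q·p}` for every `q ∈ ℤ^d`. -/
theorem stmt13 (d : ℕ) (p : EuclideanSpace ℝ (Fin d)) (hp : ‖p‖ = 1)
    (M : ℝ) (hM : 0 < M) (a : ℝ) (E : Set (EuclideanSpace ℝ (Fin d)))
    (hupper : {x : EuclideanSpace ℝ (Fin d) | a + M < ⟪x, p⟫} ⊆ E)
    (hlower : E ⊆ {x : EuclideanSpace ℝ (Fin d) | a - M < ⟪x, p⟫})
    (hBirkhoff : ∀ q : Fin d → ℤ, 0 ≤ ⟪vec q, p⟫ → transl E q ⊆ E) :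
    (∀ x : EuclideanSpace ℝ (Fin d),
        {t : ℝ | ∃ q : Fin d → ℤ, t = ⟪vec q, p⟫ ∧ x ∈ transl E q}.Nonempty ∧
        BddAbove {t : ℝ | ∃ q : Fin d → ℤ, t = ⟪vec q, p⟫ ∧ x ∈ transl E q}) ∧
    (∀ q : Fin d → ℤ,
        {x : EuclideanSpace ℝ (Fin d) | ⟪vec q, p⟫ <
            sSup {t : ℝ | ∃ q' : Fin d → ℤ, t = ⟪vec q', p⟫ ∧ x ∈ transl E q'}} ⊆
          transl E q ∧
        transl E q ⊆
          {x : EuclideanSpace ℝ (Fin d) | ⟪vec q, p⟫ ≤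
            sSup {t : ℝ | ∃ q' : Fin d → ℤ, t = ⟪vec q', p⟫ ∧ x ∈ transl E q'}}) := by
  -- p is nonzero, so some coordinate is nonzero
  have hpne : p ≠ 0 := by
    intro h; rw [h, norm_zero] at hp; norm_num at hp
  obtain ⟨i, hi⟩ : ∃ i, p i ≠ 0 := by
    by_contra h
    push_neg at h
    exact hpne (PiLp.ext fun j => by simpa using h j)
  have key : ∀ x : EuclideanSpace ℝ (Fin d),
      {t : ℝ | ∃ q : Fin d → ℤ, t = ⟪vec q, p⟫ ∧ x ∈ transl E q}.Nonempty ∧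
      BddAbove {t : ℝ | ∃ q : Fin d → ℤ, t = ⟪vec q, p⟫ ∧ x ∈ transl E q} := by
    intro x
    constructor
    · -- nonempty: choose q with q·p < ⟪x,p⟫ - a - M
      set c : ℝ := ⟪x, p⟫ - a - M with hc
      obtain ⟨k, hk⟩ : ∃ k : ℤ, (k : ℝ) * p i < c := by
        rcases lt_or_gt_of_ne hi with h | h
        · obtain ⟨k, hk⟩ := exists_int_gt (c / p i)
          exact ⟨k, (div_lt_iff_of_neg h).1 hk⟩
        · obtain ⟨k, hk⟩ := exists_int_lt (c / p i)
          exact ⟨k, by rwa [lt_div_iff₀ h] at hk⟩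
      set q : Fin d → ℤ := fun j => if j = i then k else 0 with hq
      have hqp : ⟪vec q, p⟫ = (k : ℝ) * p i := by
        rw [PiLp.inner_apply]
        simp only [RCLike.inner_apply, starRingEnd_apply, star_trivial]
        rw [Finset.sum_eq_single i]
        · simp [vec, q, mul_comm]
        · intro j _ hj; simp [vec, q, hj]
        · intro h; exact absurd (Finset.mem_univ i) h
      refine ⟨⟪vec q, p⟫, q, rfl, mem_transl.2 (hupper ?_)⟩
      have : ⟪x - vec q, p⟫ = ⟪x, p⟫ - ⟪vec q, p⟫ := inner_sub_left _ _ _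
      simp only [Set.mem_setOf_eq, this, hqp]
      linarith
    · -- bounded above by ⟪x,p⟫ - a + M
      refine ⟨⟪x, p⟫ - a + M, ?_⟩
      rintro t ⟨q, rfl, hx⟩
      have h1 : x - vec q ∈ E := mem_transl.1 hx
      have h2 := hlower h1
      have : ⟪x - vec q, p⟫ = ⟪x, p⟫ - ⟪vec q, p⟫ := inner_sub_left _ _ _
      simp only [Set.mem_setOf_eq, this] at h2
      linarith
  refine ⟨key, fun q => ⟨?_, ?_⟩⟩
  · intro x hx
    simp only [Set.mem_setOf_eq] at hx
    obtain ⟨hne, hbdd⟩ := key x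
    obtain ⟨t, ⟨q', rfl, hq'⟩, ht⟩ := exists_lt_of_lt_csSup hne hx
    rw [mem_transl]
    have hdiff : x - vec q = (x - vec q') + vec (q' - q) := by
      rw [vec_sub]; abel
    have hpos : 0 ≤ ⟪vec (q' - q), p⟫ := by
      rw [vec_sub, inner_sub_left]
      linarith
    refine hBirkhoff (q' - q) hpos ?_
    rw [mem_transl, hdiff]
    simpa using mem_transl.1 hq'
  · intro x hx
    obtain ⟨hne, hbdd⟩ := key x
    exact le_csSup hbdd ⟨q, rfl, hx⟩
end

section
/- Let Z ⊆ ℤ^d contain 0 and each standard basis vector e₁, …, e_d, be closed under addition, and satisfy Z ≠ ℤ^d. Then −(e₁ + ⋯ + e_d) does not belong to the closure of the convex hull of Z, viewed as a subset of ℝ^d. -/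
open scoped RealInnerProductSpace

lemma coord_dist_le {d : ℕ} (x y : EuclideanSpace ℝ (Fin d)) (i : Fin d) :
    dist (x i) (y i) ≤ dist x y := by
  rw [EuclideanSpace.dist_eq]
  have h1 : dist (x i) (y i) ^ 2 ≤ ∑ j, dist (x j) (y j) ^ 2 :=
    Finset.single_le_sum (f := fun j => dist (x j) (y j) ^ 2)
      (fun j _ => sq_nonneg _) (Finset.mem_univ i)
  calc dist (x i) (y i) = Real.sqrt (dist (x i) (y i) ^ 2) := (Real.sqrt_sq dist_nonneg).symm
    _ ≤ _ := Real.sqrt_le_sqrt h1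

lemma nsmul_single {d : ℕ} (j : Fin d) (n : ℕ) :
    n • (Pi.single j 1 : Fin d → ℤ) = Pi.single j (n : ℤ) := by
  funext k
  rw [Pi.smul_apply]
  simp only [Pi.single_apply]
  split <;> simp

/-- If `Z ⊆ ℤ^d` contains `0` and every standard basis vector, is closed under addition,
and `Z ≠ ℤ^d`, then `-(e₁ + ⋯ + e_d)` is not in the closure of the convex hull of `Z`
(viewed in `ℝ^d`). -/
theorem stmt16 (d : ℕ) (Z : Set (Fin d → ℤ)) (h0 : 0 ∈ Z)
    (hbasis : ∀ i : Fin d, (Pi.single i 1 : Fin d → ℤ) ∈ Z)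
    (hadd : ∀ z₁ ∈ Z, ∀ z₂ ∈ Z, z₁ + z₂ ∈ Z)
    (hne : Z ≠ Set.univ) :
    vec (-(∑ i : Fin d, Pi.single i 1)) ∉ closure (convexHull ℝ (vec '' Z)) := by
  intro hmem
  apply hne
  set S : AddSubmonoid (Fin d → ℤ) :=
    { carrier := Z
      add_mem' := fun {a b} ha hb => hadd a ha b hb
      zero_mem' := h0 } with hS
  have hSZ : ∀ x, x ∈ S ↔ x ∈ Z := fun x => Iff.rfl
  -- the target point has all coordinates -1
  have htarget : ∀ i, vec (-(∑ i : Fin d, Pi.single i 1)) i = -1 := by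
    intro i
    simp [vec, Finset.sum_apply, Pi.single_apply]
  -- get a point of the convex hull close to the target
  obtain ⟨p, hp, hdist⟩ := Metric.mem_closure_iff.1 hmem (1/2) (by norm_num)
  have hpi : ∀ i, p i < -1/2 := by
    intro i
    have := (coord_dist_le (vec (-(∑ i : Fin d, Pi.single i 1))) p i).trans_lt hdist
    rw [htarget i, Real.dist_eq] at this
    have := (abs_lt.1 this).1
    linarith
  -- unfold the convex hull
  rw [convexHull_eq] at hp
  obtain ⟨ι, t, w, zf, hw0, hw1, hzf, hcm⟩ := hp
  rw [Finset.centerMass_eq_of_sum_1 _ _ hw1] at hcm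
  -- choose integer points
  have hch : ∀ k, ∃ g : Fin d → ℤ, k ∈ t → g ∈ Z ∧ vec g = zf k := by
    intro k
    by_cases h : k ∈ t
    · obtain ⟨g, hg, hg'⟩ := hzf k h
      exact ⟨g, fun _ => ⟨hg, hg'⟩⟩
    · exact ⟨0, fun hk => absurd hk h⟩
  choose g hg using hch
  have hgZ : ∀ k ∈ t, g k ∈ Z := fun k hk => (hg k hk).1
  have hgv : ∀ k ∈ t, ∀ i, ((g k i : ℝ)) = zf k i := by
    intro k hk i
    rw [← (hg k hk).2]; rfl
  have hpi' : ∀ i, p i = ∑ k ∈ t, w k * (g k i : ℝ) := by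
    intro i
    rw [← hcm]
    rw [show (∑ k ∈ t, w k • zf k) i = ∑ k ∈ t, w k * zf k i by
      rw [WithLp.ofLp_sum, Finset.sum_apply]; rfl]
    exact Finset.sum_congr rfl fun k hk => by rw [hgv k hk i]
  -- bound
  set B : ℝ := ∑ k ∈ t, ∑ i, |(g k i : ℝ)| with hB
  have hB0 : 0 ≤ B := Finset.sum_nonneg fun k _ => Finset.sum_nonneg fun i _ => abs_nonneg _
  set N : ℕ := ⌈2 * B⌉₊ + 1 with hN
  have hN2B : 2 * B < (N : ℝ) := by
    have := Nat.le_ceil (2 * B)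
    push_cast [hN]
    linarith
  have hN0 : (0:ℝ) < N := by positivity
  set a : ι → ℕ := fun k => ⌊(N : ℝ) * w k⌋₊ with ha
  -- the integer point
  set z : Fin d → ℤ := ∑ k ∈ t, a k • g k with hz
  have hzZ : z ∈ Z := S.sum_mem fun k hk => S.nsmul_mem (hgZ k hk) (a k)
  have hzneg : ∀ i, z i ≤ -1 := by
    intro i
    have hzi : ((z i : ℝ)) = ∑ k ∈ t, (a k : ℝ) * (g k i : ℝ) := by
      rw [hz]
      rw [show ((∑ k ∈ t, a k • g k) i) = ∑ k ∈ t, (a k : ℤ) * g k i by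
        rw [Finset.sum_apply]
        exact Finset.sum_congr rfl fun k _ => by simp [nsmul_eq_mul]]
      push_cast
      ring_nf
    have key : ((z i : ℝ)) < 0 := by
      rw [hzi]
      have hterm : ∀ k ∈ t, (a k : ℝ) * (g k i : ℝ) ≤
          (N : ℝ) * w k * (g k i : ℝ) + |(g k i : ℝ)| := by
        intro k hk
        have h1 : (a k : ℝ) ≤ (N : ℝ) * w k :=
          Nat.floor_le (mul_nonneg hN0.le (hw0 k hk))
        have h2 : (N : ℝ) * w k - 1 < (a k : ℝ) := by
          have := Nat.lt_floor_add_one ((N : ℝ) * w k)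
          linarith
        have habs : |(a k : ℝ) - (N : ℝ) * w k| ≤ 1 := by
          rw [abs_le]; constructor <;> linarith
        have : (a k : ℝ) * (g k i : ℝ) - (N : ℝ) * w k * (g k i : ℝ) ≤ |(g k i : ℝ)| := by
          calc (a k : ℝ) * (g k i : ℝ) - (N : ℝ) * w k * (g k i : ℝ)
              = ((a k : ℝ) - (N : ℝ) * w k) * (g k i : ℝ) := by ring
            _ ≤ |((a k : ℝ) - (N : ℝ) * w k) * (g k i : ℝ)| := le_abs_self _
            _ = |(a k : ℝ) - (N : ℝ) * w k| * |(g k i : ℝ)| := abs_mul _ _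
            _ ≤ 1 * |(g k i : ℝ)| := by
                exact mul_le_mul_of_nonneg_right habs (abs_nonneg _)
            _ = |(g k i : ℝ)| := one_mul _
        linarith
      have hsum : ∑ k ∈ t, (a k : ℝ) * (g k i : ℝ) ≤
          (N : ℝ) * p i + ∑ k ∈ t, |(g k i : ℝ)| := by
        rw [hpi' i, Finset.mul_sum, ← Finset.sum_add_distrib]
        refine Finset.sum_le_sum fun k hk => ?_
        have := hterm k hk
        calc (a k : ℝ) * (g k i : ℝ) ≤ (N : ℝ) * w k * (g k i : ℝ) + |(g k i : ℝ)| := this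
          _ = (N : ℝ) * (w k * (g k i : ℝ)) + |(g k i : ℝ)| := by ring
      have hBi : ∑ k ∈ t, |(g k i : ℝ)| ≤ B := by
        rw [hB]
        refine Finset.sum_le_sum fun k _ => ?_
        exact Finset.single_le_sum (f := fun j => |(g k j : ℝ)|)
          (fun j _ => abs_nonneg _) (Finset.mem_univ i)
      have hNp : (N : ℝ) * p i < -B := by
        have h1 : (N : ℝ) * p i < (N : ℝ) * (-1/2) :=
          mul_lt_mul_of_pos_left (hpi i) hN0
        nlinarith
      linarith
    have h : z i < 0 := by exact_mod_cast key
    omega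
  -- negatives of basis vectors belong to Z
  have hneg : ∀ i : Fin d, -(Pi.single i 1 : Fin d → ℤ) ∈ Z := by
    intro i
    set c : Fin d → ℕ := fun j => (-(z j) - if j = i then 1 else 0).toNat with hc
    have hcz : ∀ j, (c j : ℤ) = -(z j) - if j = i then 1 else 0 := by
      intro j
      rw [hc]
      apply Int.toNat_of_nonneg
      have := hzneg j
      split <;> omega
    set wv : Fin d → ℤ := ∑ j, c j • Pi.single j (1:ℤ) with hwv
    have hwvZ : wv ∈ Z := S.sum_mem fun j _ => S.nsmul_mem (hbasis j) (c j)
    have heq : z + wv = -(Pi.single i 1 : Fin d → ℤ) := by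
      funext j
      have hwvj : wv j = (c j : ℤ) := by
        rw [hwv]
        rw [show ((∑ j', c j' • (Pi.single j' 1 : Fin d → ℤ)) j) =
            ∑ j', (c j' : ℤ) * (Pi.single j' 1 : Fin d → ℤ) j by
          rw [Finset.sum_apply]
          exact Finset.sum_congr rfl fun k _ => by simp [nsmul_eq_mul]]
        simp [Pi.single_apply, mul_ite]
      rw [Pi.add_apply, hwvj, hcz j]
      simp [Pi.single_apply]
      split <;> [omega; omega]
    have := hadd z hzZ wv hwvZ
    rwa [heq] at this
  -- conclude Z = univ
  apply Set.eq_univ_iff_forall.2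
  intro q
  have : q = ∑ j, Pi.single j (q j) := (Finset.univ_sum_single q).symm
  rw [this]
  refine S.sum_mem fun j _ => ?_
  rcases le_or_gt 0 (q j) with h | h
  · have : Pi.single j (q j) = (q j).toNat • (Pi.single j 1 : Fin d → ℤ) := by
      rw [nsmul_single, Int.toNat_of_nonneg h]
    rw [this]
    exact S.nsmul_mem (hbasis j) _
  · have : Pi.single j (q j) = (-(q j)).toNat • (-(Pi.single j 1 : Fin d → ℤ)) := by
      rw [show ((-(q j)).toNat • (-(Pi.single j 1 : Fin d → ℤ))) =
          -((-(q j)).toNat • (Pi.single j 1 : Fin d → ℤ)) by rw [smul_neg]]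
      rw [nsmul_single, Int.toNat_of_nonneg (by omega), ← Pi.single_neg, neg_neg]
    rw [this]
    exact S.nsmul_mem (hneg j) _
end
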